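/- Let β > 0 and μ > −1. For every real s, each complex root λ of the quadratic λ² + βλ + (s² + 1 + μ)(s² + 4) = 0 satisfies Re λ ≤ (−β + Re √(β² − 16(1+μ)))/2 < 0, where the square root is the principal complex square root. -/
import Mathlib


open Complex

lemma re_cpow_half (x : ℝ) : (((x : ℂ)) ^ ((2 : ℂ)⁻¹)).re = Real.sqrt x := by
  have h : ((2 : ℂ)⁻¹) = (((2 : ℝ)⁻¹ : ℝ) : ℂ) := by norm_num
  rw [h, ← Real.rpow_def, Real.sqrt_eq_rpow]
  norm_num

/-- Essential spectrum bound: for β > 0, μ > −1 and any s ∈ ℝ, each complex root λ of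
λ² + βλ + (s²+1+μ)(s²+4) = 0 satisfies
Re λ ≤ (−β + Re √(β² − 16(1+μ)))/2 < 0 (principal complex square root). -/
theorem essential_spectrum_bound (β μ : ℝ) (hβ : 0 < β) (hμ : -1 < μ) (s : ℝ)
    (lam : ℂ)
    (hroot : lam ^ 2 + (β : ℂ) * lam + (((s ^ 2 + 1 + μ) * (s ^ 2 + 4) : ℝ) : ℂ) = 0) :
    lam.re ≤ (-β + ((((β ^ 2 - 16 * (1 + μ) : ℝ)) : ℂ) ^ ((2 : ℂ)⁻¹)).re) / 2 ∧
      (-β + ((((β ^ 2 - 16 * (1 + μ) : ℝ)) : ℂ) ^ ((2 : ℂ)⁻¹)).re) / 2 < 0 := by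
  rw [re_cpow_half]
  set S := Real.sqrt (β ^ 2 - 16 * (1 + μ)) with hS
  have hSnn : 0 ≤ S := Real.sqrt_nonneg _
  have hSβ : S < β := by
    rw [hS, Real.sqrt_lt' hβ]
    nlinarith
  refine ⟨?_, by linarith⟩
  set a := lam.re with ha
  set b := lam.im with hb
  have hre : a ^ 2 - b ^ 2 + β * a + (s ^ 2 + 1 + μ) * (s ^ 2 + 4) = 0 := by
    have := congrArg Complex.re hroot
    simp [Complex.add_re, Complex.mul_re, pow_two, ← ha, ← hb] at this
    nlinarith [this]
  have him : b * (2 * a + β) = 0 := by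
    have := congrArg Complex.im hroot
    simp [Complex.add_im, Complex.mul_im, pow_two, ← ha, ← hb] at this
    nlinarith [this]
  rcases mul_eq_zero.mp him with hb0 | haβ
  · have hc : 4 * (1 + μ) ≤ (s ^ 2 + 1 + μ) * (s ^ 2 + 4) := by nlinarith [sq_nonneg s]
    have hkey : (2 * a + β) ^ 2 ≤ β ^ 2 - 16 * (1 + μ) := by nlinarith
    have h2 : 2 * a + β ≤ S := by
      rcases le_or_gt (2 * a + β) 0 with h | h
      · linarith
      · exact hS ▸ (Real.le_sqrt h.le ((sq_nonneg _).trans hkey)).mpr hkey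
    linarith
  · have : a = -β / 2 := by linarith
    rw [this]; linarith
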